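/- For every non-negative integer n and 0 < k < 1: ((1/2)_n/n!) ₂F₁(-n, 1/2; 1/2-n; k²) = ₂F₁(-n, 1/2; 1; 1-k²). -/

import Mathlib

open Finset

noncomputable def poch (a : ℝ) (k : ℕ) : ℝ := ∏ i ∈ Finset.range k, (a + i)

noncomputable def fall (a : ℝ) (k : ℕ) : ℝ := ∏ i ∈ Finset.range k, (a - i)

lemma poch_succ (a : ℝ) (k : ℕ) : poch a (k+1) = poch a k * (a + k) := by
  simp [poch, Finset.prod_range_succ]

lemma fall_succ (a : ℝ) (k : ℕ) : fall a (k+1) = fall a k * (a - k) := by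
  simp [fall, Finset.prod_range_succ]

lemma poch_add (a : ℝ) (m k : ℕ) : poch a (m + k) = poch a m * poch (a + m) k := by
  unfold poch
  rw [Finset.prod_range_add]
  congr 1
  refine Finset.prod_congr rfl fun i _ => ?_
  push_cast; ring

lemma poch_one (k : ℕ) : poch 1 k = k.factorial := by
  induction k with
  | zero => simp [poch]
  | succ k ih => rw [poch_succ, ih, Nat.factorial_succ]; push_cast; ring

lemma poch_pos {a : ℝ} (ha : 0 < a) (k : ℕ) : 0 < poch a k :=
  Finset.prod_pos fun i _ => by positivity

lemma fall_eq_neg_poch (a : ℝ) (k : ℕ) : fall a k = (-1)^k * poch (-a) k := by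
  unfold fall poch
  rw [show ((-1:ℝ))^k = ∏ _i ∈ Finset.range k, (-1:ℝ) by simp, ← Finset.prod_mul_distrib]
  exact Finset.prod_congr rfl fun i _ => by ring

lemma fall_eq_poch (a : ℝ) (k : ℕ) : fall a k = poch (a - k + 1) k := by
  unfold fall poch
  rw [← Finset.prod_range_reflect]
  refine Finset.prod_congr rfl fun i hi => ?_
  simp only [Finset.mem_range] at hi
  have : (↑(k - 1 - i) : ℝ) = k - 1 - i := by
    push_cast [Nat.cast_sub (by omega : i ≤ k - 1), Nat.cast_sub (by omega : 1 ≤ k)]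
    ring
  rw [this]; ring

lemma poch_reflect (a : ℝ) (k : ℕ) : poch (-a) k = (-1)^k * poch (a - k + 1) k := by
  have h1 := fall_eq_neg_poch a k
  have h2 := fall_eq_poch a k
  have hs : ((-1:ℝ)^k) * ((-1:ℝ)^k) = 1 := by
    rw [← pow_add]; exact Even.neg_one_pow ⟨k, rfl⟩
  calc poch (-a) k = (-1:ℝ)^k * fall a k := by rw [h1, ← mul_assoc, hs, one_mul]
    _ = (-1:ℝ)^k * poch (a - k + 1) k := by rw [h2]

lemma poch_neg_nat {m N : ℕ} (h : m ≤ N) :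
    poch (-(N:ℝ)) m = (-1)^m * m.factorial * N.choose m := by
  rw [poch_reflect (N:ℝ) m]
  have hc : ((N:ℝ)) - m + 1 = ((N - m : ℕ) : ℝ) + 1 := by
    push_cast [Nat.cast_sub h]; ring
  rw [hc]
  have key : poch (((N - m : ℕ) : ℝ) + 1) m * ((N-m).factorial : ℝ) = (N.factorial : ℝ) := by
    have := poch_add 1 (N - m) m
    rw [show (N - m) + m = N by omega, poch_one, poch_one] at this
    rw [show ((N - m : ℕ) : ℝ) + 1 = 1 + ((N - m : ℕ) : ℝ) by ring]
    rw [this]; ring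
  have key2 : ((m.factorial : ℝ) * (N.choose m : ℝ)) * ((N-m).factorial : ℝ) = (N.factorial : ℝ) := by
    have hc2 := Nat.choose_mul_factorial_mul_factorial h
    exact_mod_cast by push_cast [← hc2]; ring
  have hnz : ((N-m).factorial : ℝ) ≠ 0 := Nat.cast_ne_zero.mpr (N-m).factorial_ne_zero
  have : poch (((N - m : ℕ) : ℝ) + 1) m = (m.factorial : ℝ) * (N.choose m : ℝ) :=
    mul_right_cancel₀ hnz (by rw [key, key2])
  rw [this]; ring

lemma fall_vandermonde (x y : ℝ) (N : ℕ) :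
    fall (x + y) N = ∑ m ∈ Finset.range (N+1), (N.choose m : ℝ) * fall x m * fall y (N - m) := by
  induction N with
  | zero => simp [fall]
  | succ N ih =>
    rw [fall_succ, ih, Finset.sum_mul]
    have key : ∀ m ∈ Finset.range (N+1),
        (N.choose m : ℝ) * fall x m * fall y (N - m) * (x + y - N)
        = ((N.choose m : ℝ) * fall x (m+1) * fall y (N - m))
          + ((N.choose m : ℝ) * fall x m * fall y (N + 1 - m)) := by
      intro m hm
      simp only [Finset.mem_range] at hm
      have h1 : fall x (m+1) = fall x m * (x - m) := fall_succ x m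
      have h2 : fall y (N + 1 - m) = fall y (N - m) * (y - (N - m : ℕ)) := by
        have : N + 1 - m = (N - m) + 1 := by omega
        rw [this, fall_succ]
      rw [h1, h2]
      have hc : ((N - m : ℕ) : ℝ) = (N : ℝ) - m := by
        push_cast [Nat.cast_sub (by omega : m ≤ N)]; ring
      rw [hc]; ring
    rw [Finset.sum_congr rfl key, Finset.sum_add_distrib]
    rw [Finset.sum_range_succ'
      (fun m => ((N+1).choose m : ℝ) * fall x m * fall y (N + 1 - m)) (N+1)]
    have pascal : ∀ m ∈ Finset.range (N+1),
        (((N+1).choose (m+1) : ℝ)) * fall x (m+1) * fall y (N + 1 - (m+1))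
        = ((N.choose m : ℝ) * fall x (m+1) * fall y (N - m))
          + ((N.choose (m+1) : ℝ) * fall x (m+1) * fall y (N - m)) := by
      intro m hm
      have : (N+1).choose (m+1) = N.choose m + N.choose (m+1) := Nat.choose_succ_succ' N m
      rw [this, show N + 1 - (m+1) = N - m by omega]
      push_cast; ring
    rw [Finset.sum_congr rfl pascal, Finset.sum_add_distrib]
    have e2 : ∑ m ∈ Finset.range (N+1), (N.choose m : ℝ) * fall x m * fall y (N + 1 - m)
        = (∑ m ∈ Finset.range (N+1), (N.choose (m+1) : ℝ) * fall x (m+1) * fall y (N - m))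
          + ((N+1).choose 0 : ℝ) * fall x 0 * fall y (N + 1 - 0) := by
      rw [Finset.sum_range_succ' (fun m => (N.choose m : ℝ) * fall x m * fall y (N + 1 - m)) N]
      rw [Finset.sum_range_succ]
      simp [Nat.choose_succ_self]
    rw [e2]
    ring

lemma chu_vandermonde (b c : ℝ) (hc : 0 < c) (N : ℕ) :
    ∑ m ∈ Finset.range (N+1), (-1:ℝ)^m * (N.choose m : ℝ) * poch b m / poch c m
      = poch (c - b) N / poch c N := by
  have hprod : poch (c - b) N
      = ∑ m ∈ Finset.range (N+1),
          (N.choose m : ℝ) * ((-1)^m * poch b m) * poch (c + m) (N - m) := by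
    have h := fall_vandermonde (-b) (c + N - 1) N
    have hx : (-b) + (c + N - 1) = (c - b) + (N:ℝ) - 1 := by ring
    rw [hx, fall_eq_poch] at h
    have hl : (c - b) + (N:ℝ) - 1 - N + 1 = c - b := by ring
    rw [hl] at h
    rw [h]
    refine Finset.sum_congr rfl fun m hm => ?_
    simp only [Finset.mem_range] at hm
    rw [fall_eq_neg_poch (-b) m, neg_neg]
    have : fall (c + N - 1) (N - m) = poch (c + m) (N - m) := by
      rw [fall_eq_poch]
      congr 1
      push_cast [Nat.cast_sub (by omega : m ≤ N)]
      ring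
    rw [this]
  rw [hprod, Finset.sum_div]
  refine Finset.sum_congr rfl fun m hm => ?_
  simp only [Finset.mem_range] at hm
  have hsplit : poch c N = poch c m * poch (c + m) (N - m) := by
    rw [show N = m + (N - m) by omega, poch_add]
    congr 2
    omega
  have h1 : poch c m ≠ 0 := ne_of_gt (poch_pos hc m)
  have h2 : poch (c + m) (N - m) ≠ 0 := ne_of_gt (poch_pos (by positivity) _)
  rw [hsplit]
  field_simp

lemma coeff_eq (n j : ℕ) (hj : j ≤ n) :
    poch (1/2) n / n.factorial *
      (poch (-(n:ℝ)) j * poch (1/2) j / (poch (1/2 - n) j * j.factorial))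
    = (-1:ℝ)^j * ∑ m ∈ Finset.range (n - j + 1),
        poch (-(n:ℝ)) (j+m) * poch (1/2) (j+m) /
          (((j+m).factorial : ℝ) * ((j+m).factorial : ℝ)) * ((j+m).choose j : ℝ) := by
  set N := n - j with hN
  have hn : n = j + N := by omega
  have hcastn : (n:ℝ) = (j:ℝ) + N := by rw [hn]; push_cast; ring
  have hjf : (j.factorial : ℝ) ≠ 0 := Nat.cast_ne_zero.mpr j.factorial_ne_zero
  have hsum : ∀ m ∈ Finset.range (N+1),
      poch (-(n:ℝ)) (j+m) * poch (1/2) (j+m) /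
          (((j+m).factorial : ℝ) * ((j+m).factorial : ℝ)) * ((j+m).choose j : ℝ)
      = (poch (-(n:ℝ)) j * poch (1/2) j / ((j.factorial : ℝ) * j.factorial)) *
          ((-1:ℝ)^m * (N.choose m : ℝ) * poch (1/2 + j) m / poch (1 + j) m) := by
    intro m hm
    simp only [Finset.mem_range] at hm
    have hmN : m ≤ N := by omega
    have h1 : poch (-(n:ℝ)) (j+m)
        = poch (-(n:ℝ)) j * ((-1:ℝ)^m * m.factorial * (N.choose m : ℝ)) := by
      rw [poch_add]
      congr 1
      rw [show -(n:ℝ) + j = -(N:ℝ) by rw [hcastn]; ring]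
      exact poch_neg_nat hmN
    have h2 : poch (1/2 : ℝ) (j+m) = poch (1/2) j * poch (1/2 + j) m := poch_add _ _ _
    have h3 : (((j+m).factorial : ℝ)) = (j.factorial : ℝ) * poch (1 + j) m := by
      rw [← poch_one (j+m), poch_add, poch_one]
    have hmf : (m.factorial : ℝ) ≠ 0 := Nat.cast_ne_zero.mpr m.factorial_ne_zero
    have h4 : ((j+m).choose j : ℝ) = poch (1 + j) m / (m.factorial : ℝ) := by
      have hc := Nat.choose_mul_factorial_mul_factorial (Nat.le_add_right j m)
      have : ((j+m).choose j : ℝ) * j.factorial * ((j+m-j).factorial : ℝ)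
          = ((j+m).factorial : ℝ) := by
        exact_mod_cast congrArg (Nat.cast : ℕ → ℝ) hc
      rw [Nat.add_sub_cancel_left] at this
      rw [eq_div_iff hmf]
      refine mul_left_cancel₀ hjf ?_
      rw [← h3, ← this]; ring
    have hp1j : (0:ℝ) < poch (1 + j) m := poch_pos (by positivity) m
    rw [h1, h2, h3, h4]
    field_simp
  rw [Finset.sum_congr rfl hsum, ← Finset.mul_sum,
    chu_vandermonde (1/2 + j) (1 + j) (by positivity) N]
  have hcb : (1:ℝ) + j - (1/2 + j) = 1/2 := by ring
  rw [hcb]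
  have e1 : poch (1/2 : ℝ) n = poch (1/2) N * poch (1/2 + N) j := by
    rw [show n = N + j by omega, poch_add]
  have e2 : (n.factorial : ℝ) = (j.factorial : ℝ) * poch (1 + j) N := by
    rw [← poch_one n, show n = j + N by omega, poch_add, poch_one]
  have e3 : poch (1/2 - n : ℝ) j = (-1:ℝ)^j * poch (1/2 + N) j := by
    have h := poch_reflect ((n:ℝ) - 1/2) j
    rw [show -((n:ℝ) - 1/2) = 1/2 - n by ring] at h
    rw [h]
    congr 2
    rw [hcastn]; ring
  rw [e1, e2, e3]
  have hp1 : (0:ℝ) < poch (1 + j) N := poch_pos (by positivity) N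
  have hp2 : (0:ℝ) < poch (1/2 + N : ℝ) j := poch_pos (by positivity) j
  have hs : ((-1:ℝ)^j) * ((-1:ℝ)^j) = 1 := by
    rw [← pow_add]; exact Even.neg_one_pow ⟨j, rfl⟩
  have hneg : ((-1:ℝ)^j) ≠ 0 := pow_ne_zero _ (by norm_num)
  field_simp [hneg, ne_of_gt hp1, ne_of_gt hp2, hjf]
  have hp2' : (0:ℝ) < poch ((1 + 2*(N:ℝ))/2) j := poch_pos (by positivity) j
  rw [div_eq_iff (ne_of_gt hp2')]
  linear_combination (-(poch (1/2 : ℝ) N * poch ((1 + 2*(N:ℝ))/2) j * poch (-(n:ℝ)) j *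
    poch (1/2) j)) * hs

theorem hypergeometric_transform (n : ℕ) (k : ℝ) (hk0 : 0 < k) (hk1 : k < 1) :
    (poch (1 / 2) n / (Nat.factorial n)) *
        ∑ i ∈ Finset.range (n + 1),
          poch (-(n : ℝ)) i * poch (1 / 2) i /
            (poch (1 / 2 - n) i * (Nat.factorial i)) * (k ^ 2) ^ i =
      ∑ i ∈ Finset.range (n + 1),
        poch (-(n : ℝ)) i * poch (1 / 2) i /
          ((Nat.factorial i) * (Nat.factorial i)) * (1 - k ^ 2) ^ i := by
  set x := k ^ 2 with hx
  rw [Finset.mul_sum]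
  have hrhs : ∀ i ∈ Finset.range (n+1),
      poch (-(n:ℝ)) i * poch (1/2) i / ((Nat.factorial i : ℝ) * (Nat.factorial i)) * (1 - x)^i
      = ∑ j ∈ Finset.range (n+1),
          (poch (-(n:ℝ)) i * poch (1/2) i / ((Nat.factorial i : ℝ) * (Nat.factorial i))
            * (i.choose j : ℝ)) * ((-1:ℝ)^j * x^j) := by
    intro i hi
    simp only [Finset.mem_range] at hi
    rw [show (1 - x) = (-x) + 1 by ring, add_pow]
    rw [Finset.mul_sum]
    rw [← Finset.sum_subset (Finset.range_subset_range.mpr (by omega : i + 1 ≤ n + 1))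
      (fun j hj hj2 => ?_)]
    · refine Finset.sum_congr rfl fun j hj => ?_
      rw [neg_pow x j]
      ring
    · simp only [Finset.mem_range] at hj hj2
      have : i.choose j = 0 := Nat.choose_eq_zero_of_lt (by omega)
      rw [this]
      push_cast
      ring
  rw [Finset.sum_congr rfl hrhs, Finset.sum_comm]
  refine Finset.sum_congr rfl fun j hj => ?_
  simp only [Finset.mem_range] at hj
  have hjn : j ≤ n := by omega
  rw [← Finset.sum_mul]
  have hinner : ∑ i ∈ Finset.range (n+1),
      poch (-(n:ℝ)) i * poch (1/2) i / ((Nat.factorial i : ℝ) * (Nat.factorial i))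
        * (i.choose j : ℝ)
      = ∑ m ∈ Finset.range (n - j + 1),
          poch (-(n:ℝ)) (j+m) * poch (1/2) (j+m) /
            (((j+m).factorial : ℝ) * ((j+m).factorial : ℝ)) * ((j+m).choose j : ℝ) := by
    rw [show n - j + 1 = n + 1 - j by omega]
    rw [← Finset.sum_Ico_eq_sum_range
      (fun i => poch (-(n:ℝ)) i * poch (1/2) i /
        ((Nat.factorial i : ℝ) * (Nat.factorial i)) * (i.choose j : ℝ)) j (n+1)]
    refine (Finset.sum_subset (fun i hi => ?_) (fun i hi hi2 => ?_)).symm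
    · simp only [Finset.mem_Ico] at hi
      simp only [Finset.mem_range]
      omega
    · simp only [Finset.mem_range] at hi
      simp only [Finset.mem_Ico, not_and, not_le] at hi2
      have hij : i < j := by omega
      have : i.choose j = 0 := Nat.choose_eq_zero_of_lt hij
      rw [this]
      push_cast
      ring
  rw [hinner]
  linear_combination x ^ j * coeff_eq n j hjn
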